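/- Suppose 1 ≤ p < q < r ≤ ∞, 0 < α < 1, 1/q = α/p + (1−α)/r, φ is a measure on a set X which is nonatomic, f is a real-valued φ-measurable function, 0 < λ < ∞, and B is a φ-measurable set with φ(B) ≤ λ^{1/(1/q−1/r)} ≤ φ(X) < ∞. Then the L^q(φ) norm of f is at most 2 λ^{1−1/α} times the L^p norm of f restricted to X∖B plus 2λ times the L^r(φ) norm of f. -/

import Mathlib

open MeasureTheory Set
open scoped ENNReal

private lemma young_ennreal {α lam : ℝ} (hα0 : 0 < α) (hα1 : α < 1) (hlam : 0 < lam)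
    (a c : ℝ≥0∞) :
    a ^ α * c ^ (1 - α) ≤ ENNReal.ofReal (lam ^ (1 - 1 / α)) * a + ENNReal.ofReal lam * c := by
  have h1α : (0:ℝ) < 1 - α := by linarith
  have key : ∀ X Y : ℝ≥0∞, X ^ α * Y ^ (1 - α) ≤ X + Y := by
    intro X Y
    rcases eq_or_ne (X + Y) 0 with h0 | h0
    · obtain ⟨hX, hY⟩ := add_eq_zero.mp h0
      simp [hX, hY, ENNReal.zero_rpow_of_pos hα0, ENNReal.zero_rpow_of_pos h1α]
    rcases eq_or_ne (X + Y) ∞ with hT | hT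
    · simp [hT]
    calc X ^ α * Y ^ (1 - α) ≤ (X + Y) ^ α * (X + Y) ^ (1 - α) := by
          gcongr
          · exact le_self_add
          · exact le_add_self
      _ = (X + Y) ^ (α + (1 - α)) := (ENNReal.rpow_add _ _ h0 hT).symm
      _ = X + Y := by norm_num
  have h1 : (ENNReal.ofReal (lam ^ (1 - 1 / α)) * a) ^ α * (ENNReal.ofReal lam * c) ^ (1 - α)
      = a ^ α * c ^ (1 - α) := by
    rw [ENNReal.mul_rpow_of_nonneg _ _ hα0.le, ENNReal.mul_rpow_of_nonneg _ _ h1α.le,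
      ENNReal.ofReal_rpow_of_pos (Real.rpow_pos_of_pos hlam _), ENNReal.ofReal_rpow_of_pos hlam,
      ← Real.rpow_mul hlam.le]
    have he : (1 - 1/α) * α = α - 1 := by field_simp
    rw [he, mul_mul_mul_comm, ← ENNReal.ofReal_mul (Real.rpow_nonneg hlam.le _),
      ← Real.rpow_add hlam]
    norm_num
  calc a ^ α * c ^ (1 - α)
      = (ENNReal.ofReal (lam ^ (1 - 1 / α)) * a) ^ α * (ENNReal.ofReal lam * c) ^ (1 - α) := h1.symm
    _ ≤ _ := key _ _

private lemma interp_eLpNorm {X : Type*} [MeasurableSpace X] (ν : Measure X)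
    {p q r : ℝ≥0∞} {α : ℝ}
    (hα0 : 0 < α) (hα1 : α < 1)
    (hq : 1 / q = ENNReal.ofReal α / p + ENNReal.ofReal (1 - α) / r)
    (f : X → ℝ) (hf : Measurable f) :
    eLpNorm f q ν ≤ eLpNorm f p ν ^ α * eLpNorm f r ν ^ (1 - α) := by
  have h1α : (0:ℝ) < 1 - α := by linarith
  have hoα0 : ENNReal.ofReal α ≠ 0 := by simpa using hα0.not_ge
  have hoα1 : ENNReal.ofReal (1 - α) ≠ 0 := by simpa using h1α.not_ge
  set u := p / ENNReal.ofReal α with hu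
  set v := r / ENNReal.ofReal (1 - α) with hv
  have huv : 1 / q = 1 / u + 1 / v := by
    rw [hq, hu, hv, one_div, one_div, ENNReal.inv_div (Or.inl ENNReal.ofReal_ne_top)
      (Or.inl hoα0), ENNReal.inv_div (Or.inl ENNReal.ofReal_ne_top) (Or.inl hoα1)]
  have hm1 : AEStronglyMeasurable (fun x => ‖f x‖ ^ α) ν :=
    ((Real.continuous_rpow_const hα0.le).measurable.comp hf.norm).aestronglyMeasurable
  have hm2 : AEStronglyMeasurable (fun x => ‖f x‖ ^ (1 - α)) ν :=
    ((Real.continuous_rpow_const h1α.le).measurable.comp hf.norm).aestronglyMeasurable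
  have hH := eLpNorm_le_eLpNorm_mul_eLpNorm_of_nnnorm (μ := ν) hm1 hm2 (fun a b => a * b) 1
    (Filter.Eventually.of_forall fun x => le_of_eq (by rw [one_mul]; exact nnnorm_mul _ _))
    (hpqr := ⟨by simpa [one_div] using huv.symm⟩)
  have hfeq : (fun x => (‖f x‖ ^ α) * (‖f x‖ ^ (1 - α))) = fun x => ‖f x‖ := by
    funext x
    rw [← Real.rpow_add' (norm_nonneg _) (by norm_num)]
    norm_num
  rw [hfeq, eLpNorm_norm, ENNReal.coe_one, one_mul] at hH
  have e1 : eLpNorm (fun x => ‖f x‖ ^ α) u ν = eLpNorm f p ν ^ α := by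
    rw [eLpNorm_norm_rpow f hα0, hu, ENNReal.div_mul_cancel hoα0 ENNReal.ofReal_ne_top]
  have e2 : eLpNorm (fun x => ‖f x‖ ^ (1 - α)) v ν = eLpNorm f r ν ^ (1 - α) := by
    rw [eLpNorm_norm_rpow f h1α, hv, ENNReal.div_mul_cancel hoα1 ENNReal.ofReal_ne_top]
  rwa [e1, e2] at hH

/-- Interpolation lemma `lemma:basic_interpolation` for nonatomic measures. -/
theorem stmt3 {X : Type*} [MeasurableSpace X] (φ : Measure X)
    (hna : ∀ A : Set X, MeasurableSet A → 0 < φ A → φ A < ∞ →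
      ∃ B ⊆ A, MeasurableSet B ∧ 0 < φ B ∧ φ B < φ A)
    (p q r : ℝ≥0∞) (α : ℝ)
    (hp : 1 ≤ p) (hpq : p < q) (hqr : q < r) (hr : r ≤ ∞)
    (hα0 : 0 < α) (hα1 : α < 1)
    (hq : 1 / q = ENNReal.ofReal α / p + ENNReal.ofReal (1 - α) / r)
    (f : X → ℝ) (hf : Measurable f)
    (lam : ℝ) (hlam : 0 < lam)
    (B : Set X) (hB : MeasurableSet B)
    (hB1 : φ B ≤ ENNReal.ofReal (lam ^ ((1 / q - 1 / r).toReal⁻¹)))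
    (hB2 : ENNReal.ofReal (lam ^ ((1 / q - 1 / r).toReal⁻¹)) ≤ φ univ)
    (hfin : φ univ < ∞) :
    eLpNorm f q φ ≤
      ENNReal.ofReal (2 * lam ^ (1 - 1 / α)) * eLpNorm f p (φ.restrict Bᶜ) +
        ENNReal.ofReal (2 * lam) * eLpNorm f r φ := by
  have hq1 : 1 ≤ q := hp.trans hpq.le
  have hq0 : q ≠ 0 := (zero_lt_one.trans_le hq1).ne'
  -- exponent t for the Hölder step on B
  have hinvlt : 1 / r < 1 / q := by
    rw [one_div, one_div]; exact ENNReal.inv_lt_inv.mpr hqr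
  have hqinvT : 1 / q ≠ ∞ := by
    simp [one_div, ENNReal.inv_eq_top, hq0]
  have htpos : 0 < (1 / q - 1 / r).toReal := by
    apply ENNReal.toReal_pos
    · simpa [tsub_eq_zero_iff_le] using hinvlt.not_ge
    · exact ne_top_of_le_ne_top hqinvT tsub_le_self
  have ht : (1 / q - 1 / r).toReal = 1 / q.toReal - 1 / r.toReal := by
    rw [ENNReal.toReal_sub_of_le hinvlt.le hqinvT]
    simp [one_div, ENNReal.toReal_inv]
  have hmeas : (φ B) ^ (1 / q.toReal - 1 / r.toReal) ≤ ENNReal.ofReal lam := by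
    rw [← ht]
    calc (φ B) ^ (1 / q - 1 / r).toReal
        ≤ (ENNReal.ofReal (lam ^ ((1 / q - 1 / r).toReal⁻¹))) ^ (1 / q - 1 / r).toReal :=
          ENNReal.rpow_le_rpow hB1 htpos.le
      _ = ENNReal.ofReal lam := by
          rw [ENNReal.ofReal_rpow_of_pos (Real.rpow_pos_of_pos hlam _),
            ← Real.rpow_mul hlam.le, inv_mul_cancel₀ htpos.ne', Real.rpow_one]
  -- Hölder step on B
  have hterm1 : eLpNorm f q (φ.restrict B) ≤ ENNReal.ofReal lam * eLpNorm f r φ := by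
    calc eLpNorm f q (φ.restrict B)
        ≤ eLpNorm f r (φ.restrict B) * (φ.restrict B) univ ^ (1 / q.toReal - 1 / r.toReal) :=
          eLpNorm_le_eLpNorm_mul_rpow_measure_univ hqr.le hf.aestronglyMeasurable.restrict
      _ ≤ eLpNorm f r φ * ENNReal.ofReal lam := by
          gcongr
          · exact Measure.restrict_le_self
          · rw [Measure.restrict_apply_univ]; exact hmeas
      _ = ENNReal.ofReal lam * eLpNorm f r φ := mul_comm _ _
  -- interpolation + Young step on Bᶜ
  set ν := φ.restrict Bᶜ with hν
  have hterm2 : eLpNorm f q ν ≤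
      ENNReal.ofReal (lam ^ (1 - 1 / α)) * eLpNorm f p ν + ENNReal.ofReal lam * eLpNorm f r φ := by
    calc eLpNorm f q ν ≤ eLpNorm f p ν ^ α * eLpNorm f r ν ^ (1 - α) :=
          interp_eLpNorm ν hα0 hα1 hq f hf
      _ ≤ ENNReal.ofReal (lam ^ (1 - 1 / α)) * eLpNorm f p ν +
            ENNReal.ofReal lam * eLpNorm f r ν := young_ennreal hα0 hα1 hlam _ _
      _ ≤ _ := by
          gcongr
          exact Measure.restrict_le_self
  -- split and combine
  have hsplit : eLpNorm f q φ ≤ eLpNorm f q (φ.restrict B) + eLpNorm f q ν := by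
    calc eLpNorm f q φ = eLpNorm (B.indicator f + Bᶜ.indicator f) q φ := by
          rw [Set.indicator_self_add_compl]
      _ ≤ eLpNorm (B.indicator f) q φ + eLpNorm (Bᶜ.indicator f) q φ :=
          eLpNorm_add_le (hf.aestronglyMeasurable.indicator hB)
            (hf.aestronglyMeasurable.indicator hB.compl) hq1
      _ = eLpNorm f q (φ.restrict B) + eLpNorm f q ν := by
          rw [eLpNorm_indicator_eq_eLpNorm_restrict hB,
            eLpNorm_indicator_eq_eLpNorm_restrict hB.compl]
  have h2 : ∀ x : ℝ, 0 ≤ x → ENNReal.ofReal (2 * x) = 2 * ENNReal.ofReal x := by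
    intro x hx
    rw [ENNReal.ofReal_mul (by norm_num), ENNReal.ofReal_ofNat]
  calc eLpNorm f q φ ≤ eLpNorm f q (φ.restrict B) + eLpNorm f q ν := hsplit
    _ ≤ (ENNReal.ofReal lam * eLpNorm f r φ) +
          (ENNReal.ofReal (lam ^ (1 - 1 / α)) * eLpNorm f p ν +
            ENNReal.ofReal lam * eLpNorm f r φ) := add_le_add hterm1 hterm2
    _ = ENNReal.ofReal (lam ^ (1 - 1 / α)) * eLpNorm f p ν +
          (ENNReal.ofReal lam * eLpNorm f r φ + ENNReal.ofReal lam * eLpNorm f r φ) := by ring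
    _ ≤ (ENNReal.ofReal (lam ^ (1 - 1 / α)) * eLpNorm f p ν +
          ENNReal.ofReal (lam ^ (1 - 1 / α)) * eLpNorm f p ν) +
          (ENNReal.ofReal lam * eLpNorm f r φ + ENNReal.ofReal lam * eLpNorm f r φ) := by
          gcongr
          exact le_add_self
    _ = 2 * ENNReal.ofReal (lam ^ (1 - 1 / α)) * eLpNorm f p ν +
          2 * ENNReal.ofReal lam * eLpNorm f r φ := by ring
    _ = ENNReal.ofReal (2 * lam ^ (1 - 1 / α)) * eLpNorm f p (φ.restrict Bᶜ) +
          ENNReal.ofReal (2 * lam) * eLpNorm f r φ := by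
          rw [h2 _ (Real.rpow_nonneg hlam.le _), h2 _ hlam.le, hν]
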